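/- arXiv:1803.05812 — 3 statements merged into one kernel-verified Lean document; each statement's English description precedes it below -/
import Mathlib

section
/- Let (M, F, μ) be a measure space admitting a continuous resolution, and let A ∈ F with μ(A) > 0. Then there exists a countable partition of A into pairwise disjoint measurable sets {B_n}_{n=1}^∞ with 0 < μ(B_n) < ∞ for all n. -/
open MeasureTheory Filter

/-- A continuous resolution for a measure space `(M, μ)`: a family `(A x)_{x ≥ 0}` of
measurable sets with `μ (A 0) = 0`, monotone in `x`, each of finite measure, whose
indicator functions converge μ-a.e. as `x → y` (within `[0, ∞)`), and whose union is `M`. -/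
structure ContinuousResolution {M : Type} [MeasurableSpace M] (μ : Measure M)
    (A : ℝ → Set M) : Prop where
  measurable : ∀ x, 0 ≤ x → MeasurableSet (A x)
  zero : μ (A 0) = 0
  mono : ∀ x y, 0 ≤ x → x ≤ y → A x ⊆ A y
  finite : ∀ x, 0 ≤ x → μ (A x) < ⊤
  cont : ∀ y, 0 ≤ y → ∀ᵐ p ∂μ,
    Tendsto (fun x => Set.indicator (A x) (fun _ => (1 : ℝ)) p)
      (nhdsWithin y (Set.Ici 0)) (nhds (Set.indicator (A y) (fun _ => (1 : ℝ)) p))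
  covers : ⋃ x ∈ Set.Ici (0 : ℝ), A x = Set.univ

section Aux

variable {M : Type} [MeasurableSpace M] {μ : Measure M} {A : ℝ → Set M}

lemma aux_fin (hA : ContinuousResolution μ A) (S : Set M) {z : ℝ} (hz : 0 ≤ z) :
    μ (A z ∩ S) < ⊤ :=
  (measure_mono Set.inter_subset_left).trans_lt (hA.finite z hz)

lemma aux_mono (hA : ContinuousResolution μ A) (S : Set M) {z w : ℝ} (hz : 0 ≤ z) (hzw : z ≤ w) :
    (μ (A z ∩ S)).toReal ≤ (μ (A w ∩ S)).toReal := by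
  apply ENNReal.toReal_mono (aux_fin hA S (hz.trans hzw)).ne
  exact measure_mono (Set.inter_subset_inter_left _ (hA.mono z w hz hzw))

lemma aux_cont (hA : ContinuousResolution μ A) (S : Set M) (hS : MeasurableSet S) :
    ContinuousOn (fun z => (μ (A z ∩ S)).toReal) (Set.Ici 0) := by
  intro y hy
  have hy' : (0 : ℝ) ≤ y := hy
  have hy1 : (0 : ℝ) ≤ y + 1 := by linarith
  set ν := μ.restrict S with hν
  have key : Tendsto (fun x => ∫ p, (A x).indicator (fun _ => (1 : ℝ)) p ∂ν)
      (nhdsWithin y (Set.Ici 0)) (nhds (∫ p, (A y).indicator (fun _ => (1 : ℝ)) p ∂ν)) := by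
    apply tendsto_integral_filter_of_dominated_convergence
      ((A (y + 1)).indicator (fun _ => (1 : ℝ)))
    · filter_upwards [self_mem_nhdsWithin] with x hx
      exact (stronglyMeasurable_const.indicator (hA.measurable x hx)).aestronglyMeasurable
    · have h1 : Set.Iic (y + 1) ∈ nhdsWithin y (Set.Ici 0) :=
        nhdsWithin_le_nhds (Iic_mem_nhds (by linarith))
      filter_upwards [self_mem_nhdsWithin, h1] with x hx hx1
      apply Eventually.of_forall
      intro p
      by_cases hp : p ∈ A x
      · have hp' : p ∈ A (y + 1) := hA.mono x (y + 1) hx hx1 hp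
        simp [Set.indicator_of_mem, hp, hp']
      · rw [Set.indicator_of_notMem hp, norm_zero]
        exact Set.indicator_nonneg (fun _ _ => zero_le_one) p
    · rw [integrable_indicator_iff (hA.measurable (y + 1) hy1)]
      refine integrableOn_const (ne_of_lt ?_)
      rw [Measure.restrict_apply (hA.measurable (y + 1) hy1)]
      exact (measure_mono Set.inter_subset_left).trans_lt (hA.finite (y + 1) hy1)
    · exact ae_restrict_of_ae (hA.cont y hy')
  have heq : ∀ x : ℝ, 0 ≤ x →
      (∫ p, (A x).indicator (fun _ => (1 : ℝ)) p ∂ν) = (μ (A x ∩ S)).toReal := by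
    intro x hx
    have : (∫ p, (A x).indicator (fun _ => (1 : ℝ)) p ∂ν) = (ν (A x)).toReal :=
      integral_indicator_one (hA.measurable x hx)
    rw [this, hν, Measure.restrict_apply (hA.measurable x hx)]
  have := key.congr' (by filter_upwards [self_mem_nhdsWithin] with x hx using heq x hx)
  rwa [heq y hy'] at this

lemma aux_tendsto (hA : ContinuousResolution μ A) (S : Set M) (hS : MeasurableSet S) :
    Tendsto (fun n : ℕ => μ (A n ∩ S)) atTop (nhds (μ S)) := by
  have hmono : Monotone (fun n : ℕ => A n ∩ S) := by
    intro a b hab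
    exact Set.inter_subset_inter_left _ (hA.mono a b (Nat.cast_nonneg a) (Nat.cast_le.2 hab))
  have hU : (⋃ n : ℕ, A n ∩ S) = S := by
    apply Set.Subset.antisymm (Set.iUnion_subset fun n => Set.inter_subset_right)
    intro p hp
    have : p ∈ ⋃ x ∈ Set.Ici (0 : ℝ), A x := by rw [hA.covers]; trivial
    obtain ⟨z, hz, hpz⟩ := Set.mem_iUnion₂.1 this
    exact Set.mem_iUnion.2 ⟨⌈z⌉₊, hA.mono z ⌈z⌉₊ hz (Nat.le_ceil z) hpz, hp⟩
  have := tendsto_measure_iUnion_atTop (μ := μ) hmono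
  rwa [hU] at this

lemma aux_hit (hA : ContinuousResolution μ A) (S : Set M) (hS : MeasurableSet S) (r : ℝ)
    (hr : ENNReal.ofReal r < μ S) : ∃ b : ℝ, 0 ≤ b ∧ r < (μ (A b ∩ S)).toReal := by
  have := (aux_tendsto hA S hS).eventually (lt_mem_nhds hr)
  obtain ⟨n, hn⟩ := this.exists
  refine ⟨n, Nat.cast_nonneg n, ?_⟩
  rcases le_or_gt 0 r with h0 | h0
  · exact (ENNReal.ofReal_lt_iff_lt_toReal h0 (aux_fin hA S (Nat.cast_nonneg n)).ne).1 hn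
  · exact h0.trans_le ENNReal.toReal_nonneg

lemma aux_g0 (hA : ContinuousResolution μ A) (S : Set M) : (μ (A 0 ∩ S)).toReal = 0 := by
  rw [measure_mono_null Set.inter_subset_left hA.zero, ENNReal.toReal_zero]

lemma aux_ivt (hA : ContinuousResolution μ A) (S : Set M) (hS : MeasurableSet S) (r : ℝ)
    (h0 : 0 ≤ r) (hr : ENNReal.ofReal r < μ S) :
    ∃ z : ℝ, 0 ≤ z ∧ (μ (A z ∩ S)).toReal = r := by
  obtain ⟨b, hb, hrb⟩ := aux_hit hA S hS r hr
  have hsub : Set.Icc (0 : ℝ) b ⊆ Set.Ici 0 := fun z hz => hz.1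
  have := intermediate_value_Icc hb ((aux_cont hA S hS).mono hsub)
  have hmem : r ∈ Set.Icc ((μ (A 0 ∩ S)).toReal) ((μ (A b ∩ S)).toReal) := by
    rw [aux_g0 hA S]; exact ⟨h0, hrb.le⟩
  obtain ⟨z, hz, hgz⟩ := this hmem
  exact ⟨z, hz.1, hgz⟩

/-- The key partition lemma: given an increasing sequence of cut points along which the
measure strictly increases and which exhausts `S` up to a null set, we can partition. -/
lemma key_partition (hA : ContinuousResolution μ A) (S : Set M) (hS : MeasurableSet S)
    (x : ℕ → ℝ) (hx0 : ∀ n, 0 ≤ x n) (hxm : Monotone x)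
    (hstrict : ∀ n, μ (A (x n) ∩ S) < μ (A (x (n + 1)) ∩ S))
    (hnull : μ (S \ ⋃ n, A (x n)) = 0) :
    ∃ B : ℕ → Set M, (∀ n, MeasurableSet (B n)) ∧ Pairwise (Function.onFun Disjoint B) ∧
      (∀ n, 0 < μ (B n) ∧ μ (B n) < ⊤) ∧ (⋃ n, B n) = S := by
  set U := ⋃ n, A (x n) with hU
  have hUm : MeasurableSet U := MeasurableSet.iUnion fun n => hA.measurable _ (hx0 n)
  set B : ℕ → Set M := fun n => Nat.rec ((A (x 1) ∩ S) ∪ (S \ U))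
    (fun n _ => (A (x (n + 2)) \ A (x (n + 1))) ∩ S) n with hB
  have hB0 : B 0 = (A (x 1) ∩ S) ∪ (S \ U) := rfl
  have hBs : ∀ n, B (n + 1) = (A (x (n + 2)) \ A (x (n + 1))) ∩ S := fun n => rfl
  have hBsubS : ∀ n, B n ⊆ S := by
    intro n
    cases n with
    | zero => rw [hB0]; exact Set.union_subset Set.inter_subset_right Set.diff_subset
    | succ n => rw [hBs]; exact Set.inter_subset_right
  have hBsubA : ∀ n, B (n + 1) ⊆ A (x (n + 2)) \ A (x (n + 1)) := by
    intro n; rw [hBs]; exact Set.inter_subset_left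
  refine ⟨B, ?_, ?_, ?_, ?_⟩
  · intro n
    cases n with
    | zero =>
      rw [hB0]
      exact ((hA.measurable _ (hx0 1)).inter hS).union (hS.diff hUm)
    | succ n =>
      rw [hBs]
      exact ((hA.measurable _ (hx0 _)).diff (hA.measurable _ (hx0 _))).inter hS
  · -- pairwise disjoint
    have key : ∀ i j, i < j → Disjoint (B i) (B j) := by
      intro i j hij
      obtain ⟨m, rfl⟩ := Nat.exists_eq_add_of_lt hij
      rw [Set.disjoint_left]
      intro p hpi hpj
      have hpj' := hBsubA (i + m) hpj
      cases i with
      | zero =>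
        rw [hB0] at hpi
        rcases hpi with hpi | hpi
        · exact hpj'.2 (hA.mono (x 1) (x (0 + m + 1)) (hx0 1)
            (hxm (by omega)) hpi.1)
        · exact hpi.2 (Set.mem_iUnion.2 ⟨0 + m + 2, hpj'.1⟩)
      | succ k =>
        have hpi' := hBsubA k hpi
        exact hpj'.2 (hA.mono (x (k + 2)) (x (k + 1 + m + 1)) (hx0 _)
          (hxm (by omega)) hpi'.1)
    intro i j hij
    rcases hij.lt_or_gt with h | h
    · exact key i j h
    · exact (key j i h).symm
  · -- measures
    intro n
    cases n with
    | zero =>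
      constructor
      · have h1 : 0 < μ (A (x 1) ∩ S) := (zero_le).trans_lt (hstrict 0)
        exact h1.trans_le (measure_mono (by rw [hB0]; exact Set.subset_union_left))
      · rw [hB0]
        refine (measure_union_le _ _).trans_lt ?_
        rw [hnull, add_zero]
        exact aux_fin hA S (hx0 1)
    | succ n =>
      constructor
      · rw [pos_iff_ne_zero]
        intro h0
        have hcover : A (x (n + 2)) ∩ S ⊆
            ((A (x (n + 2)) \ A (x (n + 1))) ∩ S) ∪ (A (x (n + 1)) ∩ S) := by
          intro p hp
          by_cases hp1 : p ∈ A (x (n + 1))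
          · exact Or.inr ⟨hp1, hp.2⟩
          · exact Or.inl ⟨⟨hp.1, hp1⟩, hp.2⟩
        have := (measure_mono (μ := μ) hcover).trans (measure_union_le _ _)
        rw [← hBs, h0, zero_add] at this
        exact absurd this (hstrict (n + 1)).not_ge
      · rw [hBs]
        exact (measure_mono (Set.inter_subset_left.trans Set.diff_subset)).trans_lt
          (hA.finite _ (hx0 _))
  · -- union
    apply Set.Subset.antisymm (Set.iUnion_subset hBsubS)
    intro p hp
    by_cases hpU : p ∈ U
    · obtain ⟨n, hn⟩ := Set.mem_iUnion.1 hpU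
      clear hpU
      induction n with
      | zero =>
        have : p ∈ A (x 1) := hA.mono (x 0) (x 1) (hx0 0) (hxm (Nat.zero_le 1)) hn
        exact Set.mem_iUnion.2 ⟨0, by rw [hB0]; exact Or.inl ⟨this, hp⟩⟩
      | succ n ih =>
        by_cases hn' : p ∈ A (x n)
        · exact ih hn'
        · cases n with
          | zero => exact Set.mem_iUnion.2 ⟨0, by rw [hB0]; exact Or.inl ⟨hn, hp⟩⟩
          | succ m =>
            exact Set.mem_iUnion.2 ⟨m + 1, by rw [hBs]; exact ⟨⟨hn, hn'⟩, hp⟩⟩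
    · exact Set.mem_iUnion.2 ⟨0, by rw [hB0]; exact Or.inr ⟨hp, hpU⟩⟩

end Aux

/-- If `(M, μ)` admits a continuous resolution and `S` is measurable with
`μ S > 0`, then `S` can be partitioned into countably many pairwise disjoint measurable sets
`B n` with `0 < μ (B n) < ∞`. -/
theorem stmt3 {M : Type} [MeasurableSpace M] (μ : Measure M) (A : ℝ → Set M)
    (hA : ContinuousResolution μ A) (S : Set M) (hS : MeasurableSet S) (hpos : 0 < μ S) :
    ∃ B : ℕ → Set M, (∀ n, MeasurableSet (B n)) ∧ Pairwise (Function.onFun Disjoint B) ∧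
      (∀ n, 0 < μ (B n) ∧ μ (B n) < ⊤) ∧ (⋃ n, B n) = S := by
  rcases eq_or_ne (μ S) ⊤ with hfin | hfin
  · -- infinite case : t n = n
    have H : ∀ n : ℕ, ∃ z : ℝ, 0 ≤ z ∧ (μ (A z ∩ S)).toReal = n := by
      intro n
      exact aux_ivt hA S hS n (Nat.cast_nonneg n) (by rw [hfin]; exact ENNReal.ofReal_lt_top)
    choose x hx1 hx2 using H
    have hxm : Monotone x := by
      intro a b hab
      by_contra h
      push_neg at h
      have := aux_mono hA S (hx1 b) h.le
      rw [hx2 a, hx2 b] at this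
      have hba : b ≤ a := Nat.cast_le.1 this
      have : a = b := le_antisymm hab hba
      subst this
      exact lt_irrefl _ h
    have hstrict : ∀ n, μ (A (x n) ∩ S) < μ (A (x (n + 1)) ∩ S) := by
      intro n
      rw [← ENNReal.toReal_lt_toReal (aux_fin hA S (hx1 n)).ne (aux_fin hA S (hx1 (n + 1))).ne,
        hx2 n, hx2 (n + 1)]
      exact_mod_cast Nat.lt_succ_self n
    have hnull : μ (S \ ⋃ n, A (x n)) = 0 := by
      have hU : (⋃ n, A (x n)) = Set.univ := by
        apply Set.eq_univ_of_forall
        intro p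
        have : p ∈ ⋃ z ∈ Set.Ici (0 : ℝ), A z := by rw [hA.covers]; trivial
        obtain ⟨z, hz, hpz⟩ := Set.mem_iUnion₂.1 this
        set n : ℕ := ⌈(μ (A z ∩ S)).toReal⌉₊ + 1 with hn
        have hlt : (μ (A z ∩ S)).toReal < (n : ℝ) := by
          push_cast
          exact (Nat.le_ceil _).trans_lt (by rw [hn]; push_cast; linarith)
        have hzx : z ≤ x n := by
          by_contra h
          push_neg at h
          have := aux_mono hA S (hx1 n) h.le
          rw [hx2 n] at this
          exact absurd (this.trans_lt hlt) (lt_irrefl _)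
        exact Set.mem_iUnion.2 ⟨n, hA.mono z (x n) hz hzx hpz⟩
      rw [hU, Set.diff_univ, measure_empty]
    exact key_partition hA S hS x hx1 hxm hstrict hnull
  · -- finite case
    set c : ℝ := (μ S).toReal with hc
    have hc0 : 0 < c := ENNReal.toReal_pos hpos.ne' hfin
    set t : ℕ → ℝ := fun n => c - c / 2 ^ n with ht
    have ht2 : ∀ n : ℕ, 0 < c / 2 ^ n := fun n => by positivity
    have htlt : ∀ n, t n < c := fun n => by
      simp only [ht]; linarith [ht2 n]
    have htmono : StrictMono t := by
      apply strictMono_nat_of_lt_succ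
      intro n
      simp only [ht]
      have h1 : c / 2 ^ (n + 1) < c / 2 ^ n := by
        rw [pow_succ]
        have := ht2 n
        rw [← div_div]
        linarith [half_lt_self (ht2 n)]
      linarith
    have ht0 : ∀ n, 0 ≤ t n := by
      intro n
      simp only [ht]
      have h1 : c / 2 ^ n ≤ c / 1 := by
        apply div_le_div_of_nonneg_left hc0.le one_pos
        exact one_le_pow₀ one_le_two
      rw [div_one] at h1
      linarith
    have htS : ∀ n, ENNReal.ofReal (t n) < μ S := by
      intro n
      calc ENNReal.ofReal (t n) < ENNReal.ofReal c :=
            (ENNReal.ofReal_lt_ofReal_iff hc0).2 (htlt n)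
        _ = μ S := ENNReal.ofReal_toReal hfin
    have H : ∀ n : ℕ, ∃ z : ℝ, 0 ≤ z ∧ (μ (A z ∩ S)).toReal = t n :=
      fun n => aux_ivt hA S hS (t n) (ht0 n) (htS n)
    choose x hx1 hx2 using H
    have hxm : Monotone x := by
      intro a b hab
      by_contra h
      push_neg at h
      have := aux_mono hA S (hx1 b) h.le
      rw [hx2 a, hx2 b] at this
      have hba : b ≤ a := htmono.le_iff_le.1 this
      have : a = b := le_antisymm hab hba
      subst this
      exact lt_irrefl _ h
    have hmeas : ∀ n, μ (A (x n) ∩ S) = ENNReal.ofReal (t n) := by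
      intro n
      rw [← hx2 n, ENNReal.ofReal_toReal (aux_fin hA S (hx1 n)).ne]
    have hstrict : ∀ n, μ (A (x n) ∩ S) < μ (A (x (n + 1)) ∩ S) := by
      intro n
      rw [← ENNReal.toReal_lt_toReal (aux_fin hA S (hx1 n)).ne (aux_fin hA S (hx1 (n + 1))).ne,
        hx2 n, hx2 (n + 1)]
      exact htmono (Nat.lt_succ_self n)
    have hnull : μ (S \ ⋃ n, A (x n)) = 0 := by
      set U := ⋃ n, A (x n) with hUdef
      have hUm : MeasurableSet U := MeasurableSet.iUnion fun n => hA.measurable _ (hx1 n)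
      have hmonoseq : Monotone (fun n : ℕ => A (x n) ∩ S) := fun a b hab =>
        Set.inter_subset_inter_left _ (hA.mono _ _ (hx1 a) (hxm hab))
      have hlim1 : Tendsto (fun n : ℕ => μ (A (x n) ∩ S)) atTop
          (nhds (μ (⋃ n, A (x n) ∩ S))) := tendsto_measure_iUnion_atTop hmonoseq
      have htc : Tendsto t atTop (nhds c) := by
        have h2 : Tendsto (fun n : ℕ => c / 2 ^ n) atTop (nhds 0) := by
          have h3 : Tendsto (fun n : ℕ => ((1 : ℝ) / 2) ^ n) atTop (nhds 0) :=
            tendsto_pow_atTop_nhds_zero_of_lt_one (by norm_num) (by norm_num)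
          have := h3.const_mul c
          rw [mul_zero] at this
          refine this.congr fun n => ?_
          rw [div_pow, one_pow, mul_one_div]
        have h5 : Tendsto (fun n : ℕ => c - c / 2 ^ n) atTop (nhds (c - 0)) :=
          Tendsto.sub tendsto_const_nhds h2
        rw [sub_zero] at h5
        exact h5
      have hlim2 : Tendsto (fun n : ℕ => μ (A (x n) ∩ S)) atTop (nhds (μ S)) := by
        have h4 : Tendsto (fun n : ℕ => ENNReal.ofReal (t n)) atTop
            (nhds (ENNReal.ofReal c)) := ENNReal.tendsto_ofReal htc
        rw [hc, ENNReal.ofReal_toReal hfin] at h4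
        exact h4.congr fun n => (hmeas n).symm
      have hUS : μ (⋃ n, A (x n) ∩ S) = μ S := tendsto_nhds_unique hlim1 hlim2
      have hinter : (⋃ n, A (x n) ∩ S) = S ∩ U := by
        rw [← Set.iUnion_inter]
        exact Set.inter_comm _ _
      rw [hinter] at hUS
      have := measure_inter_add_diff S hUm (μ := μ)
      rw [hUS] at this
      nth_rewrite 2 [← add_zero (μ S)] at this
      exact (ENNReal.add_right_inj hfin).1 this
    exact key_partition hA S hS x hx1 hxm hstrict hnull
end

section
/- Let (M, F, μ) be a measure space admitting a continuous resolution and let f: M → ℝ be measurable. For every z in the spectrum of the multiplication operator M_f on L²(M, μ) (equivalently, every z in the essential range of f), there exists a sequence {A_n}_{n=1}^∞ ⊆ F of pairwise disjoint sets such that |f(x) − z| ≤ 1/n for all x ∈ A_n, μ(A_n) > 0 for all n, and Σ_{n=1}^∞ μ(A_n) < ∞. -/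
open MeasureTheory Filter
open scoped ENNReal

lemma exists_small {M : Type} [MeasurableSpace M] {μ : Measure M} {A : ℝ → Set M}
    (hA : ContinuousResolution μ A) {S : Set M} (hS : MeasurableSet S) (hpos : 0 < μ S)
    {ε : ℝ} (hε : 0 < ε) :
    ∃ T, MeasurableSet T ∧ T ⊆ S ∧ 0 < μ T ∧ μ T ≤ ENNReal.ofReal ε := by
  have hfin : ∀ x : ℝ, 0 ≤ x → μ (S ∩ A x) < ⊤ := fun x hx =>
    lt_of_le_of_lt (measure_mono Set.inter_subset_right) (hA.finite x hx)
  set g : ℝ → ℝ := fun x => (μ (S ∩ A x)).toReal with hg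
  have hgint : ∀ x : ℝ, 0 ≤ x →
      g x = ∫ p in S, Set.indicator (A x) (fun _ => (1 : ℝ)) p ∂μ := by
    intro x hx
    rw [integral_indicator_const (1 : ℝ) (hA.measurable x hx), Measure.real,
      Measure.restrict_apply (hA.measurable x hx), Set.inter_comm, smul_eq_mul, mul_one]
  have hcont : ContinuousOn g (Set.Ici 0) := by
    intro y hy
    have hy' : (0 : ℝ) ≤ y := hy
    have key : Tendsto (fun x => ∫ p in S, Set.indicator (A x) (fun _ => (1 : ℝ)) p ∂μ)
        (nhdsWithin y (Set.Ici 0))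
        (nhds (∫ p in S, Set.indicator (A y) (fun _ => (1 : ℝ)) p ∂μ)) := by
      apply tendsto_integral_filter_of_dominated_convergence
        (bound := Set.indicator (A (y + 1)) (fun _ => (1 : ℝ)))
      · filter_upwards [self_mem_nhdsWithin] with x hx
        exact ((measurable_const.indicator (hA.measurable x hx))).aestronglyMeasurable
      · have h1 : Set.Iic (y + 1) ∈ nhdsWithin y (Set.Ici 0) :=
          nhdsWithin_le_nhds (Iic_mem_nhds (by linarith))
        filter_upwards [self_mem_nhdsWithin, h1] with x hx hx1
        apply Eventually.of_forall
        intro a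
        rw [Real.norm_of_nonneg (Set.indicator_nonneg (fun _ _ => zero_le_one) a)]
        exact Set.indicator_le_indicator_of_subset (hA.mono x (y + 1) hx hx1)
          (fun _ => zero_le_one) a
      · rw [integrable_indicator_iff (hA.measurable (y + 1) (by linarith))]
        refine integrableOn_const (LT.lt.ne ?_)
        exact lt_of_le_of_lt (le_trans (Measure.restrict_apply_le _ _) le_rfl)
          (hA.finite (y + 1) (by linarith))
      · exact ae_restrict_of_ae (hA.cont y hy')
    have : Tendsto g (nhdsWithin y (Set.Ici 0)) (nhds (g y)) := by
      rw [hgint y hy']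
      apply key.congr'
      filter_upwards [self_mem_nhdsWithin] with x hx
      exact (hgint x hx).symm
    exact this
  have hg0 : g 0 = 0 := by
    have : μ (S ∩ A 0) = 0 :=
      le_antisymm (le_trans (measure_mono Set.inter_subset_right) hA.zero.le) zero_le
    simp [hg, this]
  have hex : ∃ n : ℕ, 0 < μ (S ∩ A n) := by
    by_contra h
    push_neg at h
    have hsub : S ⊆ ⋃ n : ℕ, S ∩ A n := by
      intro p hp
      have : p ∈ ⋃ x ∈ Set.Ici (0 : ℝ), A x := hA.covers ▸ Set.mem_univ p
      obtain ⟨x, hx, hpx⟩ := Set.mem_iUnion₂.1 this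
      refine Set.mem_iUnion.2 ⟨⌈x⌉₊, hp, hA.mono x ⌈x⌉₊ hx (Nat.le_ceil x) hpx⟩
    have : μ S = 0 := by
      refine le_antisymm (le_trans (measure_mono hsub) ?_) zero_le
      rw [measure_iUnion_null fun n => le_antisymm (h n) zero_le]
    exact absurd this hpos.ne'
  obtain ⟨n, hn⟩ := hex
  have hn0 : (0 : ℝ) ≤ (n : ℝ) := Nat.cast_nonneg n
  rcases le_or_gt (g n) ε with hle | hlt
  · exact ⟨S ∩ A n, hS.inter (hA.measurable n hn0), Set.inter_subset_left, hn, by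
      rw [← ENNReal.ofReal_toReal (hfin n hn0).ne]
      exact ENNReal.ofReal_le_ofReal hle⟩
  · have hIVT : ε ∈ g '' (Set.Icc 0 (n : ℝ)) := by
      apply intermediate_value_Icc hn0 (hcont.mono (Set.Icc_subset_Ici_self))
      exact ⟨by rw [hg0]; exact hε.le, hlt.le⟩
    obtain ⟨t, ht, hgt⟩ := hIVT
    have ht0 : (0 : ℝ) ≤ t := ht.1
    refine ⟨S ∩ A t, hS.inter (hA.measurable t ht0), Set.inter_subset_left, ?_, ?_⟩
    · have : 0 < g t := hgt ▸ hε
      exact (ENNReal.toReal_pos_iff.1 this).1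
    · rw [← ENNReal.ofReal_toReal (hfin t ht0).ne]
      exact ENNReal.ofReal_le_ofReal (le_of_eq hgt)

lemma ennreal_aux : (4 : ℝ≥0∞)⁻¹ * ((1 : ℝ≥0∞) - 4⁻¹)⁻¹ = 3⁻¹ := by
  have h1 : (1 : ℝ≥0∞) - 4⁻¹ = 3 * 4⁻¹ := by
    rw [ENNReal.sub_eq_of_eq_add (by norm_num)]
    rw [← ENNReal.mul_inv_cancel (a := 4) (by norm_num) (by norm_num)]
    ring_nf
  rw [h1, ENNReal.mul_inv (by norm_num) (by norm_num), inv_inv]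
  rw [← mul_assoc, mul_comm (4 : ℝ≥0∞)⁻¹, mul_assoc,
    ENNReal.inv_mul_cancel (by norm_num) (by norm_num), mul_one]


/-- If `(M, μ)` admits a continuous resolution, `f : M → ℝ` is measurable
and `z` lies in the essential range of `f` (equivalently, the spectrum of the multiplication
operator `M_f`), then there are pairwise disjoint measurable sets `Aₙ` of positive measure
with `|f x − z| ≤ 1/n` on `Aₙ` (here indexed so that `A n` corresponds to `1/(n+1)`) and
`∑ₙ μ (Aₙ) < ∞`. -/
theorem stmt4 {M : Type} [MeasurableSpace M] (μ : Measure M) (A : ℝ → Set M)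
    (hA : ContinuousResolution μ A) (f : M → ℝ) (hf : Measurable f) (z : ℝ)
    (hz : ∀ ε : ℝ, 0 < ε → 0 < μ {x | |f x - z| < ε}) :
    ∃ B : ℕ → Set M, (∀ n, MeasurableSet (B n)) ∧ Pairwise (Function.onFun Disjoint B) ∧
      (∀ n, ∀ x ∈ B n, |f x - z| ≤ 1 / (n + 1)) ∧ (∀ n, 0 < μ (B n)) ∧
      (∑' n, μ (B n)) < ⊤ := by
  classical
  set Sset : ℕ → Set M := fun n => {x | |f x - z| < 1 / ((n : ℝ) + 1)} with hSdef
  have hSmeas : ∀ n, MeasurableSet (Sset n) := fun n =>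
    measurableSet_lt ((hf.sub measurable_const).abs) measurable_const
  have hSpos : ∀ n, 0 < μ (Sset n) := fun n => hz _ (by positivity)
  have key : ∀ (c : ℝ) (n : ℕ), ∃ T : Set M, MeasurableSet T ∧ T ⊆ Sset n ∧ 0 < μ T ∧
      μ T ≤ ENNReal.ofReal (if 0 < c then c else 1) := by
    intro c n
    exact exists_small hA (hSmeas n) (hSpos n) (by split_ifs with h; exacts [h, one_pos])
  choose F hFmeas hFsub hFpos hFle using key
  set T : ℕ → Set M :=
    fun n => Nat.rec (F 1 0) (fun k prev => F ((μ prev).toReal / 4) (k + 1)) n with hTdef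
  have hTmeas : ∀ n, MeasurableSet (T n) := by
    intro n; cases n
    · exact hFmeas _ _
    · exact hFmeas _ _
  have hTsub : ∀ n, T n ⊆ Sset n := by
    intro n; cases n
    · exact hFsub _ _
    · exact hFsub _ _
  have hTpos : ∀ n, 0 < μ (T n) := by
    intro n; cases n
    · exact hFpos _ _
    · exact hFpos _ _
  have hTle : ∀ n, ∃ c, μ (T n) ≤ ENNReal.ofReal c := by
    intro n; cases n
    · exact ⟨_, hFle _ _⟩
    · exact ⟨_, hFle _ _⟩
  have hTfin : ∀ n, μ (T n) ≠ ⊤ := by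
    intro n
    obtain ⟨c, hc⟩ := hTle n
    exact (lt_of_le_of_lt hc ENNReal.ofReal_lt_top).ne
  have hstep : ∀ n, μ (T (n + 1)) ≤ μ (T n) * 4⁻¹ := by
    intro n
    have hc : 0 < (μ (T n)).toReal / 4 := by
      have := ENNReal.toReal_pos (hTpos n).ne' (hTfin n)
      positivity
    have h := hFle ((μ (T n)).toReal / 4) (n + 1)
    rw [if_pos hc] at h
    calc μ (T (n + 1)) ≤ ENNReal.ofReal ((μ (T n)).toReal / 4) := h
      _ = ENNReal.ofReal ((μ (T n)).toReal) / ENNReal.ofReal 4 :=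
          ENNReal.ofReal_div_of_pos (by norm_num)
      _ = μ (T n) * 4⁻¹ := by
          rw [ENNReal.ofReal_toReal (hTfin n), div_eq_mul_inv]
          norm_num
  have hgeo : ∀ n k, μ (T (n + k)) ≤ μ (T n) * 4⁻¹ ^ k := by
    intro n k
    induction k with
    | zero => simp
    | succ k ih =>
      have : n + (k + 1) = (n + k) + 1 := rfl
      calc μ (T (n + (k + 1))) ≤ μ (T (n + k)) * 4⁻¹ := hstep (n + k)
        _ ≤ μ (T n) * 4⁻¹ ^ k * 4⁻¹ := mul_le_mul_left ih _
        _ = μ (T n) * 4⁻¹ ^ (k + 1) := by rw [mul_assoc, ← pow_succ]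
  set U : ℕ → Set M := fun n => ⋃ k, T (n + 1 + k) with hUdef
  have hUbound : ∀ n, μ (U n) ≤ μ (T n) * 3⁻¹ := by
    intro n
    calc μ (U n) ≤ ∑' k, μ (T (n + 1 + k)) := measure_iUnion_le _
      _ ≤ ∑' k, μ (T (n + 1)) * 4⁻¹ ^ k := ENNReal.tsum_le_tsum fun k => hgeo (n + 1) k
      _ = μ (T (n + 1)) * ∑' k, (4 : ℝ≥0∞)⁻¹ ^ k := ENNReal.tsum_mul_left
      _ = μ (T (n + 1)) * (1 - 4⁻¹)⁻¹ := by rw [ENNReal.tsum_geometric]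
      _ ≤ μ (T n) * 4⁻¹ * (1 - 4⁻¹)⁻¹ := mul_le_mul_left (hstep n) _
      _ = μ (T n) * 3⁻¹ := by rw [mul_assoc, ennreal_aux]
  have hUlt : ∀ n, μ (U n) < μ (T n) := fun n =>
    lt_of_le_of_lt (hUbound n) <|
      calc μ (T n) * 3⁻¹ < μ (T n) * 1 :=
            (ENNReal.mul_lt_mul_iff_right (hTpos n).ne' (hTfin n)).2 (by norm_num)
        _ = μ (T n) := mul_one _
  refine ⟨fun n => T n \ U n, ?_, ?_, ?_, ?_, ?_⟩
  · exact fun n => (hTmeas n).diff (MeasurableSet.iUnion fun k => hTmeas _)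
  · have hd : ∀ {n m : ℕ}, n < m → Disjoint (T n \ U n) (T m \ U m) := by
      intro n m hnm
      refine Set.disjoint_left.2 fun x hxn hxm => ?_
      refine hxn.2 (Set.mem_iUnion.2 ⟨m - n - 1, ?_⟩)
      have h : n + 1 + (m - n - 1) = m := by omega
      rw [h]; exact hxm.1
    intro n m hnm
    rcases hnm.lt_or_gt with h | h
    · exact hd h
    · exact (hd h).symm
  · intro n x hx
    exact le_of_lt (hTsub n hx.1)
  · intro n
    rw [pos_iff_ne_zero]
    intro h0
    have hsub : T n ⊆ (T n \ U n) ∪ U n := by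
      intro x hx
      by_cases hxu : x ∈ U n
      · exact Or.inr hxu
      · exact Or.inl ⟨hx, hxu⟩
    have : μ (T n) ≤ μ (T n \ U n) + μ (U n) :=
      le_trans (measure_mono hsub) (measure_union_le _ _)
    rw [h0, zero_add] at this
    exact absurd (lt_of_le_of_lt this (hUlt n)) (lt_irrefl _)
  · calc (∑' n, μ (T n \ U n)) ≤ ∑' n, μ (T n) :=
          ENNReal.tsum_le_tsum fun n => measure_mono Set.diff_subset
      _ ≤ ∑' n, μ (T 0) * 4⁻¹ ^ n :=
          ENNReal.tsum_le_tsum fun n => by simpa using hgeo 0 n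
      _ = μ (T 0) * (1 - 4⁻¹)⁻¹ := by rw [ENNReal.tsum_mul_left, ENNReal.tsum_geometric]
      _ < ⊤ := ENNReal.mul_lt_top (hTfin 0).lt_top <| by
          rw [lt_top_iff_ne_top, Ne, ENNReal.inv_eq_top, tsub_eq_zero_iff_le]
          exact not_le.2 (ENNReal.inv_lt_one.2 (by norm_num))
end

section
/- Let A and B be selfadjoint operators on a Hilbert space H₂ such that B is A-bounded with relative bound a, and let C be a bounded operator on a Hilbert space H₁. Then C ⊗ B is (1 ⊗ A)-bounded with relative bound at most a·‖C‖ on the tensor product H₁ ⊗ H₂. -/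
set_option maxHeartbeats 1000000
set_option synthInstance.maxHeartbeats 400000

section Stmt13Helpers

variable {H₁ H₂ K : Type}
    [NormedAddCommGroup H₁] [InnerProductSpace ℂ H₁]
    [NormedAddCommGroup H₂] [InnerProductSpace ℂ H₂]
    [NormedAddCommGroup K] [InnerProductSpace ℂ K]
    (tmul : H₁ → H₂ → K)
    (hinner : ∀ (x x' : H₁) (y y' : H₂),
      @inner ℂ K _ (tmul x y) (tmul x' y') = @inner ℂ H₁ _ x x' * @inner ℂ H₂ _ y y')

include hinner

lemma stmt13_tmul_add_left (x x' : H₁) (y : H₂) :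
    tmul (x + x') y = tmul x y + tmul x' y := by
  have h : @inner ℂ K _ (tmul (x+x') y - (tmul x y + tmul x' y))
      (tmul (x+x') y - (tmul x y + tmul x' y)) = 0 := by
    simp only [inner_sub_left, inner_sub_right, inner_add_left, inner_add_right, hinner]
    ring
  exact sub_eq_zero.mp (inner_self_eq_zero.mp h)

lemma stmt13_tmul_smul_left (c : ℂ) (x : H₁) (y : H₂) :
    tmul (c • x) y = c • tmul x y := by
  have h : @inner ℂ K _ (tmul (c • x) y - c • tmul x y)
      (tmul (c • x) y - c • tmul x y) = 0 := by
    simp only [inner_sub_left, inner_sub_right, inner_smul_left, inner_smul_right, hinner]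
    ring
  exact sub_eq_zero.mp (inner_self_eq_zero.mp h)

lemma stmt13_tmul_add_right (x : H₁) (y y' : H₂) :
    tmul x (y + y') = tmul x y + tmul x y' := by
  have h : @inner ℂ K _ (tmul x (y+y') - (tmul x y + tmul x y'))
      (tmul x (y+y') - (tmul x y + tmul x y')) = 0 := by
    simp only [inner_sub_left, inner_sub_right, inner_add_left, inner_add_right, hinner]
    ring
  exact sub_eq_zero.mp (inner_self_eq_zero.mp h)

lemma stmt13_tmul_smul_right (c : ℂ) (x : H₁) (y : H₂) :
    tmul x (c • y) = c • tmul x y := by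
  have h : @inner ℂ K _ (tmul x (c • y) - c • tmul x y)
      (tmul x (c • y) - c • tmul x y) = 0 := by
    simp only [inner_sub_left, inner_sub_right, inner_smul_left, inner_smul_right, hinner]
    ring
  exact sub_eq_zero.mp (inner_self_eq_zero.mp h)

lemma stmt13_tmul_sum_left {n : ℕ} (x : Fin n → H₁) (y : H₂) :
    tmul (∑ i, x i) y = ∑ i, tmul (x i) y := by
  let φ : H₁ →+ K := AddMonoidHom.mk' (fun x => tmul x y)
    (fun u v => stmt13_tmul_add_left tmul hinner u v y)
  exact map_sum φ x Finset.univ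

lemma stmt13_tmul_sum_right {n : ℕ} (x : H₁) (y : Fin n → H₂) :
    tmul x (∑ i, y i) = ∑ i, tmul x (y i) := by
  let φ : H₂ →+ K := AddMonoidHom.mk' (fun y => tmul x y)
    (fun u v => stmt13_tmul_add_right tmul hinner x u v)
  exact map_sum φ y Finset.univ

lemma stmt13_inner_sum_tmul {n : ℕ} (p p' : Fin n → H₁) (q q' : Fin n → H₂) :
    @inner ℂ K _ (∑ i, tmul (p i) (q i)) (∑ j, tmul (p' j) (q' j)) =
      ∑ i, ∑ j, (@inner ℂ H₁ _ (p i) (p' j) * @inner ℂ H₂ _ (q i) (q' j)) := by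
  rw [sum_inner]
  exact Finset.sum_congr rfl fun i _ => by
    rw [inner_sum]
    exact Finset.sum_congr rfl fun j _ => hinner _ _ _ _

lemma stmt13_norm_sq_sum_tmul {n : ℕ} {e : Fin n → H₁}
    (he : Orthonormal ℂ e) (w : Fin n → H₂) :
    ‖∑ i, tmul (e i) (w i)‖ ^ 2 = ∑ i, ‖w i‖ ^ 2 := by
  have h := stmt13_inner_sum_tmul tmul hinner e e w w
  rw [orthonormal_iff_ite] at he
  have h2 : (∑ i, ∑ j, (@inner ℂ H₁ _ (e i) (e j) * @inner ℂ H₂ _ (w i) (w j)))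
      = ∑ i, @inner ℂ H₂ _ (w i) (w i) := by
    refine Finset.sum_congr rfl fun i _ => ?_
    rw [Finset.sum_eq_single i]
    · rw [he i i]; simp
    · intro j _ hj; rw [he i j]; simp [Ne.symm hj]
    · simp
  rw [h2] at h
  have h3 := congrArg (RCLike.re (K := ℂ)) h
  calc ‖∑ i, tmul (e i) (w i)‖ ^ 2
      = RCLike.re (K := ℂ) (@inner ℂ K _ (∑ i, tmul (e i) (w i)) (∑ i, tmul (e i) (w i))) :=
        (inner_self_eq_norm_sq _).symm
    _ = RCLike.re (K := ℂ) (∑ i, @inner ℂ H₂ _ (w i) (w i)) := h3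
    _ = ∑ i, ‖w i‖ ^ 2 := by
        rw [map_sum]
        exact Finset.sum_congr rfl fun i _ => inner_self_eq_norm_sq _

lemma stmt13_norm_sum_tmul_clm_le [CompleteSpace H₁] {n : ℕ} (C : H₁ →L[ℂ] H₁)
    (u : Fin n → H₁) (w : Fin n → H₂) :
    ‖∑ i, tmul (C (u i)) (w i)‖ ≤ ‖C‖ * ‖∑ i, tmul (u i) (w i)‖ := by
  have hre_mul : ∀ (r : ℝ) (z : ℂ), RCLike.re (K := ℂ) ((r : ℂ) * z) = r * RCLike.re (K := ℂ) z :=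
    fun r z => Complex.re_ofReal_mul r z
  set T : H₁ →L[ℂ] H₁ := ((‖C‖ : ℂ)^2 • (1 : H₁ →L[ℂ] H₁)) - star C * C with hTdef
  have hT : 0 ≤ T := by
    rw [ContinuousLinearMap.nonneg_iff_isPositive]
    constructor
    · have h1 : IsSelfAdjoint ((‖C‖ : ℂ)^2 • (1 : H₁ →L[ℂ] H₁)) := by
        rw [IsSelfAdjoint, star_smul, star_one]
        congr 1
        simp [← Complex.ofReal_pow]
      exact ContinuousLinearMap.isSelfAdjoint_iff_isSymmetric.mp (h1.sub (IsSelfAdjoint.star_mul_self C))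
    · intro x
      have hx : ContinuousLinearMap.reApplyInnerSelf T x
          = ‖C‖^2 * ‖x‖^2 - ‖C x‖^2 := by
        rw [ContinuousLinearMap.reApplyInnerSelf]
        have : T x = (‖C‖ : ℂ)^2 • x - (ContinuousLinearMap.adjoint C) (C x) := by
          simp [hTdef, ContinuousLinearMap.star_eq_adjoint, ContinuousLinearMap.sub_apply,
            ContinuousLinearMap.mul_apply]
        rw [this, inner_sub_left, inner_smul_left, ContinuousLinearMap.adjoint_inner_left,
          map_sub, ← Complex.ofReal_pow, Complex.conj_ofReal, hre_mul,
          inner_self_eq_norm_sq, inner_self_eq_norm_sq]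
      rw [hx]
      have h2 := C.le_opNorm x
      nlinarith [norm_nonneg (C x), norm_nonneg C, norm_nonneg x]
  set D := CFC.sqrt T with hDdef
  have hDsa : IsSelfAdjoint D := IsSelfAdjoint.of_nonneg (CFC.sqrt_nonneg T)
  have hD2 : D * D = T := by
    have := CFC.sq_sqrt T hT
    rwa [sq] at this
  have key : ∀ a b : H₁, @inner ℂ H₁ _ (D a) (D b)
      = (‖C‖ : ℂ)^2 * @inner ℂ H₁ _ a b - @inner ℂ H₁ _ (C a) (C b) := by
    intro a b
    have h1 : @inner ℂ H₁ _ (D a) (D b) = @inner ℂ H₁ _ a (D (D b)) := by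
      nth_rewrite 1 [← hDsa.adjoint_eq]
      rw [ContinuousLinearMap.adjoint_inner_left]
    rw [h1, ← ContinuousLinearMap.mul_apply, hD2]
    have : T b = (‖C‖ : ℂ)^2 • b - (ContinuousLinearMap.adjoint C) (C b) := by
      simp [hTdef, ContinuousLinearMap.star_eq_adjoint, ContinuousLinearMap.sub_apply,
        ContinuousLinearMap.mul_apply]
    rw [this, inner_sub_right, inner_smul_right, ContinuousLinearMap.adjoint_inner_right]
  have hC := stmt13_inner_sum_tmul tmul hinner (fun i => C (u i)) (fun i => C (u i)) w w
  have hU := stmt13_inner_sum_tmul tmul hinner u u w w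
  have hD := stmt13_inner_sum_tmul tmul hinner (fun i => D (u i)) (fun i => D (u i)) w w
  have hsplit : (∑ i, ∑ j, (@inner ℂ H₁ _ (D (u i)) (D (u j)) * @inner ℂ H₂ _ (w i) (w j)))
      = (‖C‖ : ℂ)^2 * (∑ i, ∑ j, (@inner ℂ H₁ _ (u i) (u j) * @inner ℂ H₂ _ (w i) (w j)))
        - ∑ i, ∑ j, (@inner ℂ H₁ _ (C (u i)) (C (u j)) * @inner ℂ H₂ _ (w i) (w j)) := by
    rw [Finset.mul_sum, ← Finset.sum_sub_distrib]
    refine Finset.sum_congr rfl fun i _ => ?_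
    rw [Finset.mul_sum, ← Finset.sum_sub_distrib]
    refine Finset.sum_congr rfl fun j _ => ?_
    rw [key]; ring
  have hre : ‖∑ i, tmul (D (u i)) (w i)‖^2
      = ‖C‖^2 * ‖∑ i, tmul (u i) (w i)‖^2 - ‖∑ i, tmul (C (u i)) (w i)‖^2 := by
    have e1 : (‖∑ i, tmul (D (u i)) (w i)‖^2 : ℝ)
        = RCLike.re (K := ℂ) (@inner ℂ K _ (∑ i, tmul (D (u i)) (w i)) (∑ i, tmul (D (u i)) (w i))) :=
      (inner_self_eq_norm_sq _).symm
    have e2 : (‖∑ i, tmul (u i) (w i)‖^2 : ℝ)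
        = RCLike.re (K := ℂ) (@inner ℂ K _ (∑ i, tmul (u i) (w i)) (∑ i, tmul (u i) (w i))) :=
      (inner_self_eq_norm_sq _).symm
    have e3 : (‖∑ i, tmul (C (u i)) (w i)‖^2 : ℝ)
        = RCLike.re (K := ℂ) (@inner ℂ K _ (∑ i, tmul (C (u i)) (w i)) (∑ i, tmul (C (u i)) (w i))) :=
      (inner_self_eq_norm_sq _).symm
    rw [e1, e2, e3, hC, hU, hD, hsplit, map_sub, ← Complex.ofReal_pow]
    congr 1
    rw [hre_mul]
  have hineq : ‖∑ i, tmul (C (u i)) (w i)‖^2 ≤ ‖C‖^2 * ‖∑ i, tmul (u i) (w i)‖^2 := by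
    nlinarith [sq_nonneg ‖∑ i, tmul (D (u i)) (w i)‖]
  have := Real.sqrt_le_sqrt hineq
  rwa [Real.sqrt_sq (norm_nonneg _), ← mul_pow,
    Real.sqrt_sq (by positivity)] at this

end Stmt13Helpers

lemma stmt13_l2_minkowski {n : ℕ} (f g h : Fin n → ℝ) (hf : ∀ i, 0 ≤ f i)
    (hfg : ∀ i, f i ≤ g i + h i) :
    Real.sqrt (∑ i, f i ^ 2) ≤ Real.sqrt (∑ i, g i ^ 2) + Real.sqrt (∑ i, h i ^ 2) := by
  have t1 : Real.sqrt (∑ i, f i ^ 2) ≤ Real.sqrt (∑ i, (g i + h i) ^ 2) := by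
    apply Real.sqrt_le_sqrt
    apply Finset.sum_le_sum
    intro i _
    have habs : |f i| ≤ |g i + h i| := by
      rw [abs_of_nonneg (hf i)]
      exact le_trans (hfg i) (le_abs_self _)
    calc f i ^ 2 = |f i| ^ 2 := (sq_abs _).symm
      _ ≤ |g i + h i| ^ 2 := pow_le_pow_left₀ (abs_nonneg _) habs 2
      _ = (g i + h i) ^ 2 := sq_abs _
  refine t1.trans ?_
  let u : EuclideanSpace ℝ (Fin n) := WithLp.toLp 2 (fun i => g i)
  let v : EuclideanSpace ℝ (Fin n) := WithLp.toLp 2 (fun i => h i)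
  have hn : ∀ (x : EuclideanSpace ℝ (Fin n)), ‖x‖ = Real.sqrt (∑ i, x i ^ 2) := by
    intro x
    rw [EuclideanSpace.norm_eq]
    congr 1
    exact Finset.sum_congr rfl fun i _ => by rw [Real.norm_eq_abs, sq_abs]
  have htri := norm_add_le u v
  rw [hn, hn, hn] at htri
  simpa [u, v] using htri

/-- Let `A, B` be (possibly unbounded) selfadjoint operators on `H₂` with
`B` being `A`-bounded with relative bound `a`, and let `C` be a bounded operator on `H₁`.
On the Hilbert tensor product `K` (axiomatized by `tmul` with multiplicative inner
products), let `TA = 1 ⊗ A` and `TB = C ⊗ B`, defined on the algebraic span `S` of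
elementary tensors `tmul x y` with `y ∈ D(A)`. Then `C ⊗ B` is `(1 ⊗ A)`-bounded with
relative bound at most `a · ‖C‖`. -/
theorem stmt13 {H₁ H₂ K : Type}
    [NormedAddCommGroup H₁] [InnerProductSpace ℂ H₁] [CompleteSpace H₁]
    [NormedAddCommGroup H₂] [InnerProductSpace ℂ H₂] [CompleteSpace H₂]
    [NormedAddCommGroup K] [InnerProductSpace ℂ K] [CompleteSpace K]
    (tmul : H₁ → H₂ → K)
    (hinner : ∀ (x x' : H₁) (y y' : H₂),
      @inner ℂ K _ (tmul x y) (tmul x' y') = @inner ℂ H₁ _ x x' * @inner ℂ H₂ _ y y')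
    (A B : H₂ →ₗ.[ℂ] H₂) (hAsa : A.adjoint = A) (hBsa : B.adjoint = B)
    (a : ℝ) (ha : 0 ≤ a)
    (hdom : A.domain ≤ B.domain)
    (hrel : ∀ ε : ℝ, 0 < ε → ∃ b : ℝ, ∀ y : A.domain,
      ‖B ⟨y.1, hdom y.2⟩‖ ≤ (a + ε) * ‖A y‖ + b * ‖y.1‖)
    (C : H₁ →L[ℂ] H₁)
    (TA TB : K →ₗ.[ℂ] K)
    (S : Submodule ℂ K)
    (hSdef : S = Submodule.span ℂ {z : K | ∃ x : H₁, ∃ y : A.domain, z = tmul x y.1})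
    (hSA : S ≤ TA.domain) (hSB : S ≤ TB.domain)
    (hTA : ∀ (x : H₁) (y : A.domain) (h : tmul x y.1 ∈ TA.domain),
      TA ⟨tmul x y.1, h⟩ = tmul x (A y))
    (hTB : ∀ (x : H₁) (y : A.domain) (h : tmul x y.1 ∈ TB.domain),
      TB ⟨tmul x y.1, h⟩ = tmul (C x) (B ⟨y.1, hdom y.2⟩)) :
    ∀ ε : ℝ, 0 < ε → ∃ b : ℝ, ∀ z (hz : z ∈ S),
      ‖TB ⟨z, hSB hz⟩‖ ≤ (a * ‖C‖ + ε) * ‖TA ⟨z, hSA hz⟩‖ + b * ‖z‖ := by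
  -- Step 1: representation of elements of S as finite sums of elementary tensors
  have hrep0 : ∀ z ∈ S, ∃ (n : ℕ) (x : Fin n → H₁) (y : Fin n → A.domain),
      z = ∑ i, tmul (x i) (y i).1 := by
    intro z hz
    rw [hSdef] at hz
    induction hz using Submodule.span_induction with
    | mem w hw =>
      obtain ⟨x, y, rfl⟩ := hw
      exact ⟨1, fun _ => x, fun _ => y, by simp⟩
    | zero =>
      exact ⟨0, Fin.elim0, Fin.elim0, by simp⟩
    | add w₁ w₂ _ _ ih₁ ih₂ =>
      obtain ⟨n, x, y, rfl⟩ := ih₁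
      obtain ⟨m, x', y', rfl⟩ := ih₂
      refine ⟨n + m, Fin.append x x', Fin.append y y', ?_⟩
      rw [Fin.sum_univ_add]
      congr 1
      · exact Finset.sum_congr rfl fun i _ => by rw [Fin.append_left, Fin.append_left]
      · exact Finset.sum_congr rfl fun i _ => by rw [Fin.append_right, Fin.append_right]
    | smul c w _ ih =>
      obtain ⟨n, x, y, rfl⟩ := ih
      refine ⟨n, fun i => c • x i, y, ?_⟩
      rw [Finset.smul_sum]
      exact Finset.sum_congr rfl fun i _ =>
        (stmt13_tmul_smul_left tmul hinner c (x i) (y i).1).symm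
  -- Step 2: orthonormal representation
  have hrep : ∀ z ∈ S, ∃ (n : ℕ) (e : Fin n → H₁) (y : Fin n → A.domain),
      Orthonormal ℂ e ∧ z = ∑ i, tmul (e i) (y i).1 := by
    intro z hz
    obtain ⟨n, x, y, rfl⟩ := hrep0 z hz
    let V : Submodule ℂ H₁ := Submodule.span ℂ (Set.range x)
    have : FiniteDimensional ℂ V := FiniteDimensional.span_of_finite ℂ (Set.finite_range x)
    let b := stdOrthonormalBasis ℂ V
    set m := Module.finrank ℂ V
    let e : Fin m → H₁ := fun j => (b j : H₁)
    have he : Orthonormal ℂ e := by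
      rw [orthonormal_iff_ite]
      intro i j
      have := orthonormal_iff_ite.mp b.orthonormal i j
      rwa [Submodule.coe_inner] at this
    have hx : ∀ i, x i ∈ V := fun i => Submodule.subset_span (Set.mem_range_self i)
    let c : Fin n → Fin m → ℂ := fun i j => b.repr ⟨x i, hx i⟩ j
    have hxe : ∀ i, x i = ∑ j, c i j • e j := by
      intro i
      have h2 : ((∑ j, b.repr ⟨x i, hx i⟩ j • b j : V) : H₁) = x i :=
        congrArg Subtype.val (b.sum_repr ⟨x i, hx i⟩)
      rw [← h2, Submodule.coe_sum]
      exact Finset.sum_congr rfl fun j _ => rfl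
    refine ⟨m, e, fun j => ∑ i, c i j • y i, he, ?_⟩
    calc ∑ i, tmul (x i) (y i).1
        = ∑ i, ∑ j, c i j • tmul (e j) (y i).1 := by
          refine Finset.sum_congr rfl fun i _ => ?_
          rw [hxe i, stmt13_tmul_sum_left tmul hinner]
          exact Finset.sum_congr rfl fun j _ => stmt13_tmul_smul_left tmul hinner _ _ _
      _ = ∑ j, ∑ i, c i j • tmul (e j) (y i).1 := Finset.sum_comm
      _ = ∑ j, tmul (e j) ((∑ i, c i j • y i : A.domain) : H₂) := by
          refine Finset.sum_congr rfl fun j _ => ?_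
          have hcoe : ((∑ i, c i j • y i : A.domain) : H₂) = ∑ i, c i j • ((y i : H₂)) := by
            push_cast
            rfl
          rw [hcoe, stmt13_tmul_sum_right tmul hinner]
          exact Finset.sum_congr rfl fun i _ =>
            (stmt13_tmul_smul_right tmul hinner _ _ _).symm
  -- Step 3: main estimate
  intro ε hε
  set εB : ℝ := ε / (‖C‖ + 1) with hεBdef
  have hC1 : (0:ℝ) < ‖C‖ + 1 := by positivity
  have hεB : 0 < εB := div_pos hε hC1
  obtain ⟨b, hb⟩ := hrel εB hεB
  set b₀ : ℝ := max b 0 with hb₀def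
  have hb₀ : 0 ≤ b₀ := le_max_right _ _
  refine ⟨‖C‖ * b₀, ?_⟩
  intro z hz
  obtain ⟨n, e, y, he, hzrep⟩ := hrep z hz
  have hmem : ∀ i, tmul (e i) (y i).1 ∈ S := fun i => by
    rw [hSdef]; exact Submodule.subset_span ⟨e i, y i, rfl⟩
  -- compute TA and TB on z
  have hsumA : (⟨z, hSA hz⟩ : TA.domain) = ∑ i, (⟨tmul (e i) (y i).1, hSA (hmem i)⟩ : TA.domain) := by
    apply Subtype.ext
    show z = _
    rw [Submodule.coe_sum, hzrep]
  have hsumB : (⟨z, hSB hz⟩ : TB.domain) = ∑ i, (⟨tmul (e i) (y i).1, hSB (hmem i)⟩ : TB.domain) := by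
    apply Subtype.ext
    show z = _
    rw [Submodule.coe_sum, hzrep]
  have hTAz : TA ⟨z, hSA hz⟩ = ∑ i, tmul (e i) (A (y i)) := by
    rw [hsumA, ← LinearPMap.toFun_eq_coe, map_sum]
    exact Finset.sum_congr rfl fun i _ => hTA (e i) (y i) _
  have hTBz : TB ⟨z, hSB hz⟩ = ∑ i, tmul (C (e i)) (B ⟨(y i).1, hdom (y i).2⟩) := by
    rw [hsumB, ← LinearPMap.toFun_eq_coe, map_sum]
    exact Finset.sum_congr rfl fun i _ => hTB (e i) (y i) _
  -- norms
  have hnz : ‖z‖ = Real.sqrt (∑ i, ‖(y i).1‖ ^ 2) := by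
    rw [← stmt13_norm_sq_sum_tmul tmul hinner he (fun i => (y i).1), ← hzrep,
      Real.sqrt_sq (norm_nonneg _)]
  have hnA : ‖TA ⟨z, hSA hz⟩‖ = Real.sqrt (∑ i, ‖A (y i)‖ ^ 2) := by
    rw [← stmt13_norm_sq_sum_tmul tmul hinner he (fun i => A (y i)), ← hTAz,
      Real.sqrt_sq (norm_nonneg _)]
  have hnBsum : ‖∑ i, tmul (e i) (B ⟨(y i).1, hdom (y i).2⟩)‖
      = Real.sqrt (∑ i, ‖B ⟨(y i).1, hdom (y i).2⟩‖ ^ 2) := by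
    rw [← stmt13_norm_sq_sum_tmul tmul hinner he (fun i => B ⟨(y i).1, hdom (y i).2⟩),
      Real.sqrt_sq (norm_nonneg _)]
  have hCB : ‖TB ⟨z, hSB hz⟩‖ ≤ ‖C‖ * ‖∑ i, tmul (e i) (B ⟨(y i).1, hdom (y i).2⟩)‖ := by
    rw [hTBz]
    exact stmt13_norm_sum_tmul_clm_le tmul hinner C e (fun i => B ⟨(y i).1, hdom (y i).2⟩)
  -- Minkowski
  have hmink : Real.sqrt (∑ i, ‖B ⟨(y i).1, hdom (y i).2⟩‖ ^ 2)
      ≤ Real.sqrt (∑ i, ((a + εB) * ‖A (y i)‖) ^ 2)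
        + Real.sqrt (∑ i, (b₀ * ‖(y i).1‖) ^ 2) := by
    apply stmt13_l2_minkowski
    · intro i; exact norm_nonneg _
    · intro i
      have := hb (y i)
      have hbb : b * ‖(y i).1‖ ≤ b₀ * ‖(y i).1‖ :=
        mul_le_mul_of_nonneg_right (le_max_left _ _) (norm_nonneg _)
      linarith
  have hpull1 : Real.sqrt (∑ i, ((a + εB) * ‖A (y i)‖) ^ 2)
      = (a + εB) * Real.sqrt (∑ i, ‖A (y i)‖ ^ 2) := by
    have : (∑ i, ((a + εB) * ‖A (y i)‖) ^ 2) = (a + εB)^2 * ∑ i, ‖A (y i)‖ ^ 2 := by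
      rw [Finset.mul_sum]
      exact Finset.sum_congr rfl fun i _ => by ring
    rw [this, Real.sqrt_mul (sq_nonneg _), Real.sqrt_sq (by positivity)]
  have hpull2 : Real.sqrt (∑ i, (b₀ * ‖(y i).1‖) ^ 2)
      = b₀ * Real.sqrt (∑ i, ‖(y i).1‖ ^ 2) := by
    have : (∑ i, (b₀ * ‖(y i).1‖) ^ 2) = b₀^2 * ∑ i, ‖(y i).1‖ ^ 2 := by
      rw [Finset.mul_sum]
      exact Finset.sum_congr rfl fun i _ => by ring
    rw [this, Real.sqrt_mul (sq_nonneg _), Real.sqrt_sq hb₀]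
  -- assemble
  have hchain : ‖TB ⟨z, hSB hz⟩‖
      ≤ ‖C‖ * ((a + εB) * ‖TA ⟨z, hSA hz⟩‖ + b₀ * ‖z‖) := by
    calc ‖TB ⟨z, hSB hz⟩‖
        ≤ ‖C‖ * ‖∑ i, tmul (e i) (B ⟨(y i).1, hdom (y i).2⟩)‖ := hCB
      _ ≤ ‖C‖ * ((a + εB) * ‖TA ⟨z, hSA hz⟩‖ + b₀ * ‖z‖) := by
          apply mul_le_mul_of_nonneg_left _ (norm_nonneg C)
          rw [hnBsum, hnA, hnz]
          calc Real.sqrt (∑ i, ‖B ⟨(y i).1, hdom (y i).2⟩‖ ^ 2)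
              ≤ Real.sqrt (∑ i, ((a + εB) * ‖A (y i)‖) ^ 2)
                + Real.sqrt (∑ i, (b₀ * ‖(y i).1‖) ^ 2) := hmink
            _ = (a + εB) * Real.sqrt (∑ i, ‖A (y i)‖ ^ 2)
                + b₀ * Real.sqrt (∑ i, ‖(y i).1‖ ^ 2) := by rw [hpull1, hpull2]
  have hcoef : ‖C‖ * (a + εB) ≤ a * ‖C‖ + ε := by
    have h1 : ‖C‖ * εB ≤ ε := by
      rw [hεBdef]
      have h2 : ‖C‖ / (‖C‖ + 1) ≤ 1 := by
        rw [div_le_one hC1]; linarith [norm_nonneg C]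
      calc ‖C‖ * (ε / (‖C‖ + 1)) = ε * (‖C‖ / (‖C‖ + 1)) := by ring
        _ ≤ ε * 1 := mul_le_mul_of_nonneg_left h2 (le_of_lt hε)
        _ = ε := mul_one ε
    nlinarith [norm_nonneg C]
  calc ‖TB ⟨z, hSB hz⟩‖ ≤ ‖C‖ * ((a + εB) * ‖TA ⟨z, hSA hz⟩‖ + b₀ * ‖z‖) := hchain
    _ = (‖C‖ * (a + εB)) * ‖TA ⟨z, hSA hz⟩‖ + (‖C‖ * b₀) * ‖z‖ := by ring
    _ ≤ (a * ‖C‖ + ε) * ‖TA ⟨z, hSA hz⟩‖ + (‖C‖ * b₀) * ‖z‖ := by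
        have := mul_le_mul_of_nonneg_right hcoef (norm_nonneg (TA ⟨z, hSA hz⟩))
        linarith
end
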